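/- Let h > 0 and let u solve BVP(h). Then for all y ∈ [0,1]: (i) 0 < u(0) ≤ u(y) ≤ u(1) < c_*; (ii) 0 ≤ u'(y) ≤ u'(1) and u'(1) = (κ_L/(L·κ))·h·(c_* − u(1)); (iii) 0 ≤ u''(y) ≤ r(c_*)·h²/κ. -/

import Mathlib

open Set MeasureTheory intervalIntegral Filter

/-- `u` (with derivative `u'` and second derivative `u''`) solves the boundary value
problem BVP(h): `(κ/h²)·u'' = r(u)` on `[0,1]`, `u'(0) = 0`,
`u(1) + (L·κ/(κ_L·h))·u'(1) = c_*`. -/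
def SolvesBVP (κ κL L cstar : ℝ) (r : ℝ → ℝ) (h : ℝ)
    (u u' u'' : ℝ → ℝ) : Prop :=
  (∀ y ∈ Icc (0:ℝ) 1, HasDerivWithinAt u (u' y) (Icc (0:ℝ) 1) y) ∧
  (∀ y ∈ Icc (0:ℝ) 1, HasDerivWithinAt u' (u'' y) (Icc (0:ℝ) 1) y) ∧
  ContinuousOn u'' (Icc (0:ℝ) 1) ∧
  (∀ y ∈ Icc (0:ℝ) 1, (κ / h ^ 2) * u'' y = r (u y)) ∧
  u' 0 = 0 ∧
  u 1 + (L * κ / (κL * h)) * u' 1 = cstar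

section BVPAux

private lemma hasDerivAt_of_bvp {f f' : ℝ → ℝ}
    (hf : ∀ y ∈ Icc (0:ℝ) 1, HasDerivWithinAt f (f' y) (Icc (0:ℝ) 1) y)
    {x : ℝ} (hx : x ∈ Ioo (0:ℝ) 1) : HasDerivAt f (f' x) x :=
  (hf x (Ioo_subset_Icc_self hx)).hasDerivAt (Icc_mem_nhds hx.1 hx.2)

private lemma strictMonoOn_aux {f f' : ℝ → ℝ} {p q : ℝ} (h0 : 0 ≤ p) (h1 : q ≤ 1)
    (hf : ∀ y ∈ Icc (0:ℝ) 1, HasDerivWithinAt f (f' y) (Icc (0:ℝ) 1) y)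
    (hpos : ∀ y ∈ Ioo p q, 0 < f' y) : StrictMonoOn f (Icc p q) := by
  apply strictMonoOn_of_deriv_pos (convex_Icc p q)
  · have hcont : ContinuousOn f (Icc (0:ℝ) 1) := fun y hy => (hf y hy).continuousWithinAt
    exact hcont.mono (Icc_subset_Icc h0 h1)
  · intro x hx
    rw [interior_Icc] at hx
    have hx01 : x ∈ Ioo (0:ℝ) 1 := ⟨lt_of_le_of_lt h0 hx.1, lt_of_lt_of_le hx.2 h1⟩
    rw [(hasDerivAt_of_bvp hf hx01).deriv]
    exact hpos x hx

private lemma strictAntiOn_aux {f f' : ℝ → ℝ} {p q : ℝ} (h0 : 0 ≤ p) (h1 : q ≤ 1)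
    (hf : ∀ y ∈ Icc (0:ℝ) 1, HasDerivWithinAt f (f' y) (Icc (0:ℝ) 1) y)
    (hneg : ∀ y ∈ Ioo p q, f' y < 0) : StrictAntiOn f (Icc p q) := by
  apply strictAntiOn_of_deriv_neg (convex_Icc p q)
  · have hcont : ContinuousOn f (Icc (0:ℝ) 1) := fun y hy => (hf y hy).continuousWithinAt
    exact hcont.mono (Icc_subset_Icc h0 h1)
  · intro x hx
    rw [interior_Icc] at hx
    have hx01 : x ∈ Ioo (0:ℝ) 1 := ⟨lt_of_le_of_lt h0 hx.1, lt_of_lt_of_le hx.2 h1⟩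
    rw [(hasDerivAt_of_bvp hf hx01).deriv]
    exact hneg x hx

private lemma monotoneOn_aux {f f' : ℝ → ℝ} {p q : ℝ} (h0 : 0 ≤ p) (h1 : q ≤ 1)
    (hf : ∀ y ∈ Icc (0:ℝ) 1, HasDerivWithinAt f (f' y) (Icc (0:ℝ) 1) y)
    (hpos : ∀ y ∈ Ioo p q, 0 ≤ f' y) : MonotoneOn f (Icc p q) := by
  apply monotoneOn_of_deriv_nonneg (convex_Icc p q)
  · have hcont : ContinuousOn f (Icc (0:ℝ) 1) := fun y hy => (hf y hy).continuousWithinAt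
    exact hcont.mono (Icc_subset_Icc h0 h1)
  · intro x hx
    rw [interior_Icc] at hx
    have hx01 : x ∈ Ioo (0:ℝ) 1 := ⟨lt_of_le_of_lt h0 hx.1, lt_of_lt_of_le hx.2 h1⟩
    exact (hasDerivAt_of_bvp hf hx01).differentiableAt.differentiableWithinAt
  · intro x hx
    rw [interior_Icc] at hx
    have hx01 : x ∈ Ioo (0:ℝ) 1 := ⟨lt_of_le_of_lt h0 hx.1, lt_of_lt_of_le hx.2 h1⟩
    rw [(hasDerivAt_of_bvp hf hx01).deriv]
    exact hpos x hx

private lemma antitoneOn_aux {f f' : ℝ → ℝ} {p q : ℝ} (h0 : 0 ≤ p) (h1 : q ≤ 1)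
    (hf : ∀ y ∈ Icc (0:ℝ) 1, HasDerivWithinAt f (f' y) (Icc (0:ℝ) 1) y)
    (hneg : ∀ y ∈ Ioo p q, f' y ≤ 0) : AntitoneOn f (Icc p q) := by
  apply antitoneOn_of_deriv_nonpos (convex_Icc p q)
  · have hcont : ContinuousOn f (Icc (0:ℝ) 1) := fun y hy => (hf y hy).continuousWithinAt
    exact hcont.mono (Icc_subset_Icc h0 h1)
  · intro x hx
    rw [interior_Icc] at hx
    have hx01 : x ∈ Ioo (0:ℝ) 1 := ⟨lt_of_le_of_lt h0 hx.1, lt_of_lt_of_le hx.2 h1⟩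
    exact (hasDerivAt_of_bvp hf hx01).differentiableAt.differentiableWithinAt
  · intro x hx
    rw [interior_Icc] at hx
    have hx01 : x ∈ Ioo (0:ℝ) 1 := ⟨lt_of_le_of_lt h0 hx.1, lt_of_lt_of_le hx.2 h1⟩
    rw [(hasDerivAt_of_bvp hf hx01).deriv]
    exact hneg x hx

end BVPAux

set_option maxHeartbeats 1000000 in
theorem monotonicity_bounds_BVP
    (κ κL L cstar : ℝ) (hκ : 0 < κ) (hκL : 0 < κL) (hL : 0 < L) (hc : 0 < cstar)
    (r : ℝ → ℝ) (hr : ContDiff ℝ 1 r) (hrsign : ∀ s : ℝ, s ≠ 0 → s * r s > 0)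
    (hr' : ∀ s : ℝ, 0 ≤ deriv r s)
    (h : ℝ) (hh : 0 < h) (u u' u'' : ℝ → ℝ)
    (hu : SolvesBVP κ κL L cstar r h u u' u'') :
    ∀ y ∈ Icc (0:ℝ) 1,
      (0 < u 0 ∧ u 0 ≤ u y ∧ u y ≤ u 1 ∧ u 1 < cstar) ∧
      (0 ≤ u' y ∧ u' y ≤ u' 1 ∧ u' 1 = (κL / (L * κ)) * h * (cstar - u 1)) ∧
      (0 ≤ u'' y ∧ u'' y ≤ r cstar * h ^ 2 / κ) := by
  obtain ⟨hd1, hd2, hc'', hode, hbc0, hbc1⟩ := hu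
  have hκ0 : κ ≠ 0 := hκ.ne'
  have hh0 : h ≠ 0 := hh.ne'
  have h01 : (0:ℝ) ∈ Icc (0:ℝ) 1 := ⟨le_refl 0, zero_le_one⟩
  have h11 : (1:ℝ) ∈ Icc (0:ℝ) 1 := ⟨zero_le_one, le_refl 1⟩
  have hode' : ∀ y ∈ Icc (0:ℝ) 1, u'' y = r (u y) * h ^ 2 / κ := by
    intro y hy
    rw [← hode y hy]
    field_simp
  -- basic facts about r
  have hrmono : Monotone r := monotone_of_deriv_nonneg (hr.differentiable one_ne_zero) hr'
  have hrpos : ∀ s : ℝ, 0 < s → 0 < r s := by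
    intro s hs
    rcases mul_pos_iff.mp (hrsign s hs.ne') with ⟨_, h2⟩ | ⟨h1, _⟩
    · exact h2
    · linarith
  have hrneg : ∀ s : ℝ, s < 0 → r s < 0 := by
    intro s hs
    rcases mul_pos_iff.mp (hrsign s hs.ne) with ⟨h1, _⟩ | ⟨_, h2⟩
    · linarith
    · exact h2
  have hr0 : r 0 = 0 := by
    have hge : 0 ≤ r 0 := by
      have ht : Tendsto r (nhdsWithin 0 (Ioi (0:ℝ))) (nhds (r 0)) :=
        (hr.continuous.tendsto 0).mono_left nhdsWithin_le_nhds
      refine ge_of_tendsto ht ?_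
      filter_upwards [self_mem_nhdsWithin] with s hs
      exact (hrpos s hs).le
    have hle : r 0 ≤ 0 := by
      have ht : Tendsto r (nhdsWithin 0 (Iio (0:ℝ))) (nhds (r 0)) :=
        (hr.continuous.tendsto 0).mono_left nhdsWithin_le_nhds
      refine le_of_tendsto ht ?_
      filter_upwards [self_mem_nhdsWithin] with s hs
      exact (hrneg s hs).le
    linarith
  have hrnonneg : ∀ s : ℝ, 0 ≤ s → 0 ≤ r s := by
    intro s hs
    calc (0:ℝ) = r 0 := hr0.symm
    _ ≤ r s := hrmono hs
  -- continuity
  have hcu : ContinuousOn u (Icc (0:ℝ) 1) := fun y hy => (hd1 y hy).continuousWithinAt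
  have hcu' : ContinuousOn u' (Icc (0:ℝ) 1) := fun y hy => (hd2 y hy).continuousWithinAt
  -- minimum point
  obtain ⟨a, haI, hmin⟩ := isCompact_Icc.exists_isMinOn (nonempty_Icc.mpr zero_le_one) hcu
  have hmin' : ∀ y ∈ Icc (0:ℝ) 1, u a ≤ u y := fun y hy => hmin hy
  have hk : 0 < L * κ / (κL * h) := by positivity
  -- key positivity
  have hua : 0 < u a := by
    by_contra hua
    push_neg at hua
    rcases lt_or_eq_of_le hua with hlt | heq
    · -- u a < 0
      rcases eq_or_lt_of_le haI.2 with ha1 | ha1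
      · -- a = 1
        have hu1neg : u 1 < 0 := by rw [← ha1]; exact hlt
        have hpos : 0 < L * κ / (κL * h) * u' 1 := by linarith
        have hu'1 : 0 < u' 1 := by
          rcases mul_pos_iff.mp hpos with ⟨_, h2⟩ | ⟨h1, _⟩
          · exact h2
          · linarith
        have hcw : ContinuousWithinAt u' (Icc (0:ℝ) 1) 1 := hcu' 1 h11
        have hnb : u' ⁻¹' Ioi 0 ∈ nhdsWithin 1 (Icc (0:ℝ) 1) := hcw (Ioi_mem_nhds hu'1)
        rw [Metric.mem_nhdsWithin_iff] at hnb
        obtain ⟨ε, hε, hball⟩ := hnb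
        set b := max 0 (1 - ε / 2) with hbdef
        have hb0 : 0 ≤ b := le_max_left _ _
        have hb1 : b < 1 := by
          apply max_lt one_pos
          linarith
        have hbe : 1 - ε / 2 ≤ b := le_max_right _ _
        have hmono : StrictMonoOn u (Icc b 1) := by
          apply strictMonoOn_aux hb0 le_rfl hd1
          intro y hy
          have hyI : y ∈ Icc (0:ℝ) 1 := ⟨le_trans hb0 hy.1.le, hy.2.le⟩
          have hyb : y ∈ Metric.ball (1:ℝ) ε := by
            rw [Metric.mem_ball, Real.dist_eq, abs_lt]
            constructor <;> linarith [hy.1, hy.2, hbe]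
          exact hball ⟨hyb, hyI⟩
        have h1 : u b < u 1 := hmono ⟨le_rfl, hb1.le⟩ ⟨hb1.le, le_rfl⟩ hb1
        have h2 : u a ≤ u b := hmin' b ⟨hb0, hb1.le⟩
        rw [← ha1] at h1
        linarith
      · -- a < 1
        have hu'a : u' a = 0 := by
          rcases eq_or_lt_of_le haI.1 with h0a | h0a
          · rw [← h0a]; exact hbc0
          · have haIoo : a ∈ Ioo (0:ℝ) 1 := ⟨h0a, ha1⟩
            have hda : HasDerivAt u (u' a) a := hasDerivAt_of_bvp hd1 haIoo
            exact (hmin.isLocalMin (Icc_mem_nhds haIoo.1 haIoo.2)).hasDerivAt_eq_zero hda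
        have hcwa : ContinuousWithinAt u (Icc (0:ℝ) 1) a := hcu a haI
        have hnb : u ⁻¹' Iio 0 ∈ nhdsWithin a (Icc (0:ℝ) 1) := hcwa (Iio_mem_nhds hlt)
        rw [Metric.mem_nhdsWithin_iff] at hnb
        obtain ⟨ε, hε, hball⟩ := hnb
        set b := min 1 (a + ε / 2) with hbdef
        have hab : a < b := lt_min ha1 (by linarith)
        have hble : b ≤ 1 := min_le_left _ _
        have hble' : b ≤ a + ε / 2 := min_le_right _ _
        have hsub : Icc a b ⊆ Icc (0:ℝ) 1 := Icc_subset_Icc haI.1 hble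
        have huneg : ∀ y ∈ Icc a b, u y < 0 := by
          intro y hy
          refine hball ⟨?_, hsub hy⟩
          rw [Metric.mem_ball, Real.dist_eq, abs_lt]
          constructor <;> linarith [hy.1, hy.2, hble']
        have hu''neg : ∀ y ∈ Icc a b, u'' y < 0 := by
          intro y hy
          rw [hode' y (hsub hy)]
          have h1 : r (u y) < 0 := hrneg _ (huneg y hy)
          have h2 : r (u y) * h ^ 2 < 0 := by nlinarith [sq_nonneg h, pow_pos hh 2]
          exact div_neg_of_neg_of_pos h2 hκ
        have hanti' : StrictAntiOn u' (Icc a b) :=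
          strictAntiOn_aux haI.1 hble hd2 (fun y hy => hu''neg y (Ioo_subset_Icc_self hy))
        have hu'neg : ∀ y ∈ Ioo a b, u' y < 0 := by
          intro y hy
          have := hanti' ⟨le_rfl, hab.le⟩ ⟨hy.1.le, hy.2.le⟩ hy.1
          rwa [hu'a] at this
        have hanti : StrictAntiOn u (Icc a b) := strictAntiOn_aux haI.1 hble hd1 hu'neg
        have h1 : u b < u a := hanti ⟨le_rfl, hab.le⟩ ⟨hab.le, le_rfl⟩ hab
        have h2 : u a ≤ u b := hmin' b (hsub ⟨hab.le, le_rfl⟩)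
        linarith
    · -- u a = 0 : Gronwall argument
      have hunn : ∀ y ∈ Icc (0:ℝ) 1, 0 ≤ u y := by
        intro y hy
        have := hmin' y hy
        rwa [heq] at this
      have hu''nn : ∀ y ∈ Icc (0:ℝ) 1, 0 ≤ u'' y := by
        intro y hy
        rw [hode' y hy]
        have := hrnonneg (u y) (hunn y hy)
        positivity
      have hu'mono : MonotoneOn u' (Icc (0:ℝ) 1) :=
        monotoneOn_aux le_rfl le_rfl hd2 (fun y hy => hu''nn y (Ioo_subset_Icc_self hy))
      have hu'nn : ∀ y ∈ Icc (0:ℝ) 1, 0 ≤ u' y := by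
        intro y hy
        have := hu'mono h01 hy hy.1
        rwa [hbc0] at this
      have humono : MonotoneOn u (Icc (0:ℝ) 1) :=
        monotoneOn_aux le_rfl le_rfl hd1 (fun y hy => hu'nn y (Ioo_subset_Icc_self hy))
      have hu0 : u 0 = 0 := by
        have h1 : u 0 ≤ u a := humono h01 haI haI.1
        have h2 : 0 ≤ u 0 := hunn 0 h01
        rw [heq] at h1
        linarith
      have hu1nn : 0 ≤ u 1 := hunn 1 h11
      obtain ⟨s0, hs0, hmax⟩ := isCompact_Icc.exists_isMaxOn (nonempty_Icc.mpr hu1nn)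
        ((hr.continuous_deriv le_rfl).continuousOn)
      set K := deriv r s0 with hKdef
      have hK0 : 0 ≤ K := hr' s0
      have hrK : ∀ t ∈ Icc 0 (u 1), r t ≤ K * t := by
        intro t ht
        have hg : MonotoneOn (fun t => K * t - r t) (Icc 0 (u 1)) := by
          apply monotoneOn_of_deriv_nonneg (convex_Icc _ _)
          · exact ((continuous_const.mul continuous_id).sub hr.continuous).continuousOn
          · exact ((differentiable_const K |>.mul differentiable_id).sub
              (hr.differentiable one_ne_zero)).differentiableOn
          · intro x hx
            have hxI : x ∈ Icc 0 (u 1) := interior_subset hx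
            have hda : HasDerivAt (fun t : ℝ => K * t - r t) (K - deriv r x) x := by
              have := ((hasDerivAt_id x).const_mul K).sub
                (((hr.differentiable one_ne_zero) x).hasDerivAt)
              simp only [mul_one] at this
              exact this
            rw [hda.deriv]
            have : deriv r x ≤ K := hmax hxI
            linarith
        have := hg (left_mem_Icc.mpr hu1nn) ht ht.1
        simp only [mul_zero, hr0, sub_zero] at this
        linarith
      set c := h ^ 2 / κ with hcdef
      have hcpos : 0 < c := by positivity
      set C := 1 + c * K with hCdef
      have hC1 : 1 ≤ C := by nlinarith
      set ψ' : ℝ → ℝ := fun y =>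
        (u' y + u'' y) * Real.exp (-C * y) + (u y + u' y) * (-C * Real.exp (-C * y)) with hψ'def
      set ψ : ℝ → ℝ := fun y => (u y + u' y) * Real.exp (-C * y) with hψdef
      have hψd : ∀ y ∈ Icc (0:ℝ) 1, HasDerivWithinAt ψ (ψ' y) (Icc (0:ℝ) 1) y := by
        intro y hy
        have he : HasDerivAt (fun y : ℝ => Real.exp (-C * y)) (-C * Real.exp (-C * y)) y := by
          have h1 : HasDerivAt (fun y : ℝ => -C * y) (-C) y := by
            simpa using (hasDerivAt_id y).const_mul (-C)
          have h2 := (Real.hasDerivAt_exp (-C * y)).comp y h1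
          have h3 : (fun y : ℝ => Real.exp (-C * y)) = Real.exp ∘ fun y : ℝ => -C * y := rfl
          rw [h3]
          rw [mul_comm (-C) (Real.exp _)]
          exact h2
        exact ((hd1 y hy).add (hd2 y hy)).mul he.hasDerivWithinAt
      have hψanti : AntitoneOn ψ (Icc (0:ℝ) 1) := by
        apply antitoneOn_aux le_rfl le_rfl hψd
        intro y hy
        have hyI : y ∈ Icc (0:ℝ) 1 := Ioo_subset_Icc_self hy
        have huy : 0 ≤ u y := hunn y hyI
        have hu'y : 0 ≤ u' y := hu'nn y hyI
        have huy1 : u y ≤ u 1 := humono hyI h11 hyI.2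
        have hbound : u'' y ≤ c * K * u y := by
          rw [hode' y hyI]
          have := hrK (u y) ⟨huy, huy1⟩
          calc r (u y) * h ^ 2 / κ = r (u y) * c := by rw [hcdef]; ring
          _ ≤ (K * u y) * c := by nlinarith
          _ = c * K * u y := by ring
        have hexp : 0 < Real.exp (-C * y) := Real.exp_pos _
        have hkey : u' y + u'' y ≤ C * (u y + u' y) := by nlinarith
        have : ψ' y = ((u' y + u'' y) - C * (u y + u' y)) * Real.exp (-C * y) := by
          rw [hψ'def]; ring
        rw [this]
        apply mul_nonpos_of_nonpos_of_nonneg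
        · linarith
        · exact hexp.le
      have hψ0 : ψ 0 = 0 := by
        simp [hψdef, hu0, hbc0]
      have hz1 : u 1 = 0 ∧ u' 1 = 0 := by
        have h1 : ψ 1 ≤ ψ 0 := hψanti h01 h11 zero_le_one
        rw [hψ0] at h1
        have hexp : 0 < Real.exp (-C * 1) := Real.exp_pos _
        have hsum : u 1 + u' 1 ≤ 0 := by
          by_contra hcon
          push_neg at hcon
          have : 0 < ψ 1 := by
            rw [hψdef]
            exact mul_pos hcon hexp
          linarith
        have h2 : 0 ≤ u 1 := hunn 1 h11
        have h3 : 0 ≤ u' 1 := hu'nn 1 h11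
        constructor <;> linarith
      rw [hz1.1, hz1.2] at hbc1
      simp at hbc1
      linarith
  -- now the main conclusions
  have hupos : ∀ y ∈ Icc (0:ℝ) 1, 0 < u y := fun y hy => lt_of_lt_of_le hua (hmin' y hy)
  have hu''pos : ∀ y ∈ Icc (0:ℝ) 1, 0 < u'' y := by
    intro y hy
    rw [hode' y hy]
    have := hrpos (u y) (hupos y hy)
    positivity
  have hu'smono : StrictMonoOn u' (Icc (0:ℝ) 1) :=
    strictMonoOn_aux le_rfl le_rfl hd2 (fun y hy => hu''pos y (Ioo_subset_Icc_self hy))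
  have hu'nn : ∀ y ∈ Icc (0:ℝ) 1, 0 ≤ u' y := by
    intro y hy
    have := hu'smono.monotoneOn h01 hy hy.1
    rwa [hbc0] at this
  have humono : MonotoneOn u (Icc (0:ℝ) 1) :=
    monotoneOn_aux le_rfl le_rfl hd1 (fun y hy => hu'nn y (Ioo_subset_Icc_self hy))
  have hu'1pos : 0 < u' 1 := by
    have := hu'smono h01 h11 one_pos
    rwa [hbc0] at this
  have hu1lt : u 1 < cstar := by
    have := mul_pos hk hu'1pos
    linarith
  have hu'1eq : u' 1 = κL / (L * κ) * h * (cstar - u 1) := by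
    have hL0 : L ≠ 0 := hL.ne'
    have hκL0 : κL ≠ 0 := hκL.ne'
    field_simp at hbc1 ⊢
    linarith
  have hu''ub : ∀ y ∈ Icc (0:ℝ) 1, u'' y ≤ r cstar * h ^ 2 / κ := by
    intro y hy
    rw [hode' y hy]
    have h1 : u y ≤ u 1 := humono hy h11 hy.2
    have h2 : r (u y) ≤ r cstar := hrmono (by linarith)
    gcongr
  intro y hy
  refine ⟨⟨hupos 0 h01, humono h01 hy hy.1, humono hy h11 hy.2, hu1lt⟩,
    ⟨hu'nn y hy, hu'smono.monotoneOn hy h11 hy.2, hu'1eq⟩,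
    ⟨(hu''pos y hy).le, hu''ub y hy⟩⟩
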